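/- arXiv:1609.01766 — 2 statements merged into one kernel-verified Lean document; each statement's English description precedes it below -/
import Mathlib

section
/- For 0 ≤ n ≤ r put w_n^+ = u_{−n−1/2} + p·u_{n+1/2} and w_n^− = u_{−n−1/2} − p^{−1}·u_{n+1/2}. Then for all 1 ≤ i ≤ r and 0 ≤ n ≤ r: t(w_n^+) = ((p·q^{δ_{n,0}} − p^{−1}·q^{−δ_{n,0}})/(q − q^{−1}))·w_n^+; f_i(w_n^+) = δ_{i,n+1}·w_{n+1}^+; e_i(w_n^+) = δ_{i,n}·w_{n−1}^+; t(w_n^−) = ((p·q^{−δ_{n,0}} − p^{−1}·q^{δ_{n,0}})/(q − q^{−1}))·w_n^−; f_i(w_n^−) = δ_{i,n+1}·w_{n+1}^−; e_i(w_n^−) = δ_{i,n}·w_{n−1}^−. Consequently V^+ = span{w_n^+} and V^− = span{w_n^−} are each invariant under all of t, e_i, f_i, k_i, k_i^{−1}, and V = V^+ ⊕ V^− as modules for the algebra generated by these operators. -/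
open scoped BigOperators

attribute [local instance] Classical.propDecidable

noncomputable section

/-- The field `ℚ(p,q)` of rational functions in two indeterminates over `ℚ`. -/
abbrev K2 : Type := FractionRing (MvPolynomial (Fin 2) ℚ)

/-- The indeterminate `p`. -/
noncomputable def pp : K2 := algebraMap (MvPolynomial (Fin 2) ℚ) K2 (MvPolynomial.X 0)

/-- The indeterminate `q`. -/
noncomputable def qq : K2 := algebraMap (MvPolynomial (Fin 2) ℚ) K2 (MvPolynomial.X 1)

/-- The index set `I = {-r-1/2, -r+1/2, ..., r+1/2}` of half-integers, as a subtype of `ℚ`. -/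
def HIdx (r : ℕ) : Type := {a : ℚ // ∃ k : ℤ, -(r : ℤ) - 1 ≤ k ∧ k ≤ r ∧ a = (k : ℚ) + 1/2}

instance (r : ℕ) : DecidableEq (HIdx r) := fun a b =>
  decidable_of_iff (a.1 = b.1) Subtype.ext_iff.symm

/-- Negation on the index set. -/
def HIdx.neg {r : ℕ} (a : HIdx r) : HIdx r :=
  ⟨-a.1, by
    obtain ⟨k, h1, h2, h3⟩ := a.2
    exact ⟨-k - 1, by omega, by omega, by rw [h3]; push_cast; ring⟩⟩

/-- Interpret a rational number as an element of the index set (junk value if out of range). -/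
def toHI (r : ℕ) (a : ℚ) : HIdx r :=
  if h : ∃ k : ℤ, -(r : ℤ) - 1 ≤ k ∧ k ≤ r ∧ a = (k : ℚ) + 1/2 then ⟨a, h⟩
  else ⟨-(1/2 : ℚ), ⟨-1, by omega, by omega, by norm_num⟩⟩


/-- The natural representation `V`, the free `K2`-module on the index set `I`. -/
abbrev V1 (r : ℕ) : Type := HIdx r →₀ K2

/-- The basis vector `u_a` of `V`. -/
noncomputable def uv {r : ℕ} (a : HIdx r) : V1 r := Finsupp.single a 1

/-- `u_a` for a rational label. -/
noncomputable def uvq (r : ℕ) (a : ℚ) : V1 r := uv (toHI r a)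

/-- `K_i`-weight of the basis vector `u_a`: `K_i u_a = q ^ kexp i a • u_a`. -/
def kexp (i a : ℚ) : ℤ :=
  (if a = i - 1/2 then 1 else 0) - (if a = i + 1/2 then 1 else 0)

/-- The operator `E_i` on `V`: `E_i u_a = δ_{a, i+1/2} u_{i-1/2}`. -/
noncomputable def E1 (r : ℕ) (i : ℚ) : Module.End K2 (V1 r) :=
  Finsupp.lift (V1 r) K2 (HIdx r) (fun a => if a.1 = i + 1/2 then uvq r (i - 1/2) else 0)

/-- The operator `F_i` on `V`: `F_i u_a = δ_{a, i-1/2} u_{i+1/2}`. -/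
noncomputable def F1 (r : ℕ) (i : ℚ) : Module.End K2 (V1 r) :=
  Finsupp.lift (V1 r) K2 (HIdx r) (fun a => if a.1 = i - 1/2 then uvq r (i + 1/2) else 0)

/-- The operator `K_i` on `V`. -/
noncomputable def K1 (r : ℕ) (i : ℚ) : Module.End K2 (V1 r) :=
  Finsupp.lift (V1 r) K2 (HIdx r) (fun a => (qq ^ kexp i a.1 : K2) • uv a)

/-- The operator `K_i⁻¹` on `V`. -/
noncomputable def K1inv (r : ℕ) (i : ℚ) : Module.End K2 (V1 r) :=
  Finsupp.lift (V1 r) K2 (HIdx r) (fun a => (qq ^ (-(kexp i a.1)) : K2) • uv a)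

/-- The coideal operator `t = E_0 + q F_0 K_0⁻¹ + ((p - p⁻¹)/(q - q⁻¹)) K_0⁻¹` on `V`. -/
noncomputable def t1 (r : ℕ) : Module.End K2 (V1 r) :=
  E1 r 0 + qq • (F1 r 0 * K1inv r 0) + ((pp - pp⁻¹) / (qq - qq⁻¹)) • K1inv r 0

/-- The coideal operator `e_i = E_i + F_{-i} K_i⁻¹` on `V`. -/
noncomputable def e1 (r : ℕ) (i : ℚ) : Module.End K2 (V1 r) :=
  E1 r i + F1 r (-i) * K1inv r i

/-- The coideal operator `f_i = E_{-i} + K_{-i}⁻¹ F_i` on `V`. -/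
noncomputable def f1 (r : ℕ) (i : ℚ) : Module.End K2 (V1 r) :=
  E1 r (-i) + K1inv r (-i) * F1 r i

/-- The coideal operator `k_i = K_i K_{-i}⁻¹` on `V`. -/
noncomputable def k1 (r : ℕ) (i : ℚ) : Module.End K2 (V1 r) :=
  K1 r i * K1inv r (-i)

/-- The inverse `k_i⁻¹ = K_i⁻¹ K_{-i}` on `V`. -/
noncomputable def k1inv (r : ℕ) (i : ℚ) : Module.End K2 (V1 r) :=
  K1inv r i * K1 r (-i)

/-- `w_n⁺ = u_{-n-1/2} + p u_{n+1/2}`. -/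
noncomputable def wplus (r : ℕ) (n : ℕ) : V1 r :=
  uvq r (-(n : ℚ) - 1/2) + pp • uvq r ((n : ℚ) + 1/2)

/-- `w_n⁻ = u_{-n-1/2} - p⁻¹ u_{n+1/2}`. -/
noncomputable def wminus (r : ℕ) (n : ℕ) : V1 r :=
  uvq r (-(n : ℚ) - 1/2) - pp⁻¹ • uvq r ((n : ℚ) + 1/2)

-- basic lemmas test
lemma lift_uv {r : ℕ} (g : HIdx r → V1 r) (a : HIdx r) :
    Finsupp.lift (V1 r) K2 (HIdx r) g (uv a) = g a := by
  simp [uv]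

lemma toHI_val {r : ℕ} {a : ℚ} (h : ∃ k : ℤ, -(r:ℤ) - 1 ≤ k ∧ k ≤ r ∧ a = (k:ℚ) + 1/2) :
    (toHI r a).1 = a := by rw [show toHI r a = (⟨a, h⟩ : HIdx r) from dif_pos h]

def idxA (r n : ℕ) : HIdx r := toHI r (-(n:ℚ) - 1/2)
def idxB (r n : ℕ) : HIdx r := toHI r ((n:ℚ) + 1/2)

lemma idxA_val {r n : ℕ} (hn : n ≤ r) : (idxA r n).1 = -(n:ℚ) - 1/2 :=
  toHI_val ⟨-(n:ℤ) - 1, by omega, by omega, by push_cast; ring⟩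

lemma idxB_val {r n : ℕ} (hn : n ≤ r) : (idxB r n).1 = (n:ℚ) + 1/2 :=
  toHI_val ⟨(n:ℤ), by omega, by omega, by push_cast; ring⟩

lemma E1_uv {r : ℕ} (i : ℚ) (a : HIdx r) :
    E1 r i (uv a) = if a.1 = i + 1/2 then uvq r (i - 1/2) else 0 := lift_uv _ _

lemma F1_uv {r : ℕ} (i : ℚ) (a : HIdx r) :
    F1 r i (uv a) = if a.1 = i - 1/2 then uvq r (i + 1/2) else 0 := lift_uv _ _

lemma K1_uv {r : ℕ} (i : ℚ) (a : HIdx r) :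
    K1 r i (uv a) = (qq ^ kexp i a.1 : K2) • uv a := lift_uv _ _

lemma K1inv_uv {r : ℕ} (i : ℚ) (a : HIdx r) :
    K1inv r i (uv a) = (qq ^ (-(kexp i a.1)) : K2) • uv a := lift_uv _ _
lemma alg_ne {f : MvPolynomial (Fin 2) ℚ} (hf : f ≠ 0) :
    algebraMap (MvPolynomial (Fin 2) ℚ) K2 f ≠ 0 := fun h =>
  hf (IsFractionRing.injective (MvPolynomial (Fin 2) ℚ) K2 (by simpa using h))

lemma pp_ne : pp ≠ 0 := alg_ne (MvPolynomial.X_ne_zero 0)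
lemma qq_ne : qq ≠ 0 := alg_ne (MvPolynomial.X_ne_zero 1)

lemma pp_sq_ne : pp ^ 2 + 1 ≠ 0 := by
  have : pp ^ 2 + 1 = algebraMap (MvPolynomial (Fin 2) ℚ) K2 (MvPolynomial.X 0 ^ 2 + 1) := by
    simp [pp, map_add, map_pow, map_one]
  rw [this]
  apply alg_ne
  intro h
  have := congrArg (MvPolynomial.eval (fun _ => (0:ℚ))) h
  simp at this
lemma qq_sq_ne : qq ^ 2 - 1 ≠ 0 := by
  have : qq ^ 2 - 1 = algebraMap (MvPolynomial (Fin 2) ℚ) K2 (MvPolynomial.X 1 ^ 2 - 1) := by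
    simp [qq, map_sub, map_pow, map_one]
  rw [this]
  apply alg_ne
  intro h
  have := congrArg (MvPolynomial.eval (fun _ => (2:ℚ))) h
  simp at this
  norm_num at this

lemma qsub_ne : qq - qq⁻¹ ≠ 0 := by
  have h : qq ^ 2 - 1 = qq * (qq - qq⁻¹) := by field_simp [qq_ne]
  intro hc; exact qq_sq_ne (by rw [h, hc, mul_zero])

lemma psum_ne : pp + pp⁻¹ ≠ 0 := by
  have h : pp ^ 2 + 1 = pp * (pp + pp⁻¹) := by field_simp [pp_ne]
  intro hc; exact pp_sq_ne (by rw [h, hc, mul_zero])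
lemma toHI_A {r n : ℕ} (hn : n ≤ r) : (toHI r (-(n:ℚ) - 1/2)).1 = -(n:ℚ) - 1/2 :=
  toHI_val ⟨-(n:ℤ) - 1, by omega, by omega, by push_cast; ring⟩

lemma toHI_B {r n : ℕ} (hn : n ≤ r) : (toHI r ((n:ℚ) + 1/2)).1 = (n:ℚ) + 1/2 :=
  toHI_val ⟨(n:ℤ), by omega, by omega, by push_cast; ring⟩

lemma e1_w (r i n : ℕ) (hi1 : 1 ≤ i) (hir : i ≤ r) (hn : n ≤ r) (c : K2) :
    e1 r (i:ℚ) (uvq r (-(n:ℚ) - 1/2) + c • uvq r ((n:ℚ) + 1/2))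
      = if i = n then uvq r (-(n:ℚ) + 1/2) + c • uvq r ((n:ℚ) - 1/2) else 0 := by
  have hi0 : (1:ℚ) ≤ (i:ℚ) := by exact_mod_cast hi1
  have hn0 : (0:ℚ) ≤ (n:ℚ) := Nat.cast_nonneg n
  have h1 : ¬(-(n:ℚ) - 1/2 = (i:ℚ) + 1/2) := by intro h; linarith
  have h2 : ¬(-(n:ℚ) - 1/2 = (i:ℚ) - 1/2) := by intro h; linarith
  have h5 : ¬((n:ℚ) + 1/2 = -(i:ℚ) - 1/2) := by intro h; linarith
  by_cases h : i = n
  · subst h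
    have h3 : (-(i:ℚ) - 1/2 = -(i:ℚ) - 1/2) := rfl
    simp only [e1, LinearMap.add_apply, Module.End.mul_apply, map_add, map_smul,
      uvq, E1_uv, F1_uv, K1inv_uv, toHI_A hn, toHI_B hn, kexp,
      if_neg h1, if_neg h2, if_neg h5, if_pos h3, if_pos rfl, if_true, sub_self,
      neg_zero, zpow_zero, one_smul, smul_zero, smul_add, add_zero, zero_add,
      if_pos (show (i:ℚ) + 1/2 = (i:ℚ) + 1/2 from rfl)]
  · have h3 : ¬(-(n:ℚ) - 1/2 = -(i:ℚ) - 1/2) := by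
      intro hc; exact h (by exact_mod_cast (by linarith : (i:ℚ) = (n:ℚ)))
    have h4 : ¬((n:ℚ) + 1/2 = (i:ℚ) + 1/2) := by
      intro hc; exact h (by exact_mod_cast (by linarith : (i:ℚ) = (n:ℚ)))
    simp only [e1, LinearMap.add_apply, Module.End.mul_apply, map_add, map_smul,
      uvq, E1_uv, F1_uv, K1inv_uv, toHI_A hn, toHI_B hn, kexp,
      if_neg h1, if_neg h2, if_neg h5, if_neg h3, if_neg h4,
      smul_zero, add_zero, zero_add, if_neg h]
lemma f1_w (r i n : ℕ) (hi1 : 1 ≤ i) (hir : i ≤ r) (hn : n ≤ r) (c : K2) :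
    f1 r (i:ℚ) (uvq r (-(n:ℚ) - 1/2) + c • uvq r ((n:ℚ) + 1/2))
      = if i = n + 1 then uvq r (-(i:ℚ) - 1/2) + c • uvq r ((i:ℚ) + 1/2) else 0 := by
  have hi0 : (1:ℚ) ≤ (i:ℚ) := by exact_mod_cast hi1
  have hn0 : (0:ℚ) ≤ (n:ℚ) := Nat.cast_nonneg n
  have h1 : ¬(-(n:ℚ) - 1/2 = (i:ℚ) - 1/2) := by intro h; linarith
  have h2 : ¬((n:ℚ) + 1/2 = -(i:ℚ) + 1/2) := by intro h; linarith
  have h3 : ¬((i:ℚ) + 1/2 = -(i:ℚ) - 1/2) := by intro h; linarith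
  have h4 : ¬((i:ℚ) + 1/2 = -(i:ℚ) + 1/2) := by intro h; linarith
  by_cases h : i = n + 1
  · have hAi : (-(n:ℚ) - 1/2 = -(i:ℚ) + 1/2) := by
      subst h; push_cast; ring
    have hBi : ((n:ℚ) + 1/2 = (i:ℚ) - 1/2) := by
      subst h; push_cast; ring
    simp only [f1, LinearMap.add_apply, Module.End.mul_apply, map_add, map_smul,
      uvq, E1_uv, F1_uv, K1inv_uv, toHI_A hn, toHI_B hn, toHI_B hir, kexp,
      if_neg h1, if_neg h2, if_neg h3, if_neg h4, if_pos hAi, if_pos hBi, if_pos h,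
      sub_self, neg_zero, zpow_zero, one_smul, smul_zero, smul_add, map_zero,
      add_zero, zero_add]
  · have hAi : ¬(-(n:ℚ) - 1/2 = -(i:ℚ) + 1/2) := by
      intro hc; exact h (by exact_mod_cast (by linarith : (i:ℚ) = (n:ℚ) + 1))
    have hBi : ¬((n:ℚ) + 1/2 = (i:ℚ) - 1/2) := by
      intro hc; exact h (by exact_mod_cast (by linarith : (i:ℚ) = (n:ℚ) + 1))
    simp only [f1, LinearMap.add_apply, Module.End.mul_apply, map_add, map_smul,
      uvq, E1_uv, F1_uv, K1inv_uv, toHI_A hn, toHI_B hn, kexp,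
      if_neg h1, if_neg h2, if_neg hAi, if_neg hBi, if_neg h,
      smul_zero, add_zero, zero_add, map_zero]
lemma kexpA {i n : ℕ} (hi1 : 1 ≤ i) : kexp (i:ℚ) (-(n:ℚ) - 1/2) = 0 := by
  have hi0 : (1:ℚ) ≤ (i:ℚ) := by exact_mod_cast hi1
  have hn0 : (0:ℚ) ≤ (n:ℚ) := Nat.cast_nonneg n
  have h1 : ¬(-(n:ℚ) - 1/2 = (i:ℚ) - 1/2) := by intro h; linarith
  have h2 : ¬(-(n:ℚ) - 1/2 = (i:ℚ) + 1/2) := by intro h; linarith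
  simp only [kexp, if_neg h1, if_neg h2, sub_zero]

lemma kexpB' {i n : ℕ} (hi1 : 1 ≤ i) : kexp (-(i:ℚ)) ((n:ℚ) + 1/2) = 0 := by
  have hi0 : (1:ℚ) ≤ (i:ℚ) := by exact_mod_cast hi1
  have hn0 : (0:ℚ) ≤ (n:ℚ) := Nat.cast_nonneg n
  have h1 : ¬((n:ℚ) + 1/2 = -(i:ℚ) - 1/2) := by intro h; linarith
  have h2 : ¬((n:ℚ) + 1/2 = -(i:ℚ) + 1/2) := by intro h; linarith
  simp only [kexp, if_neg h1, if_neg h2, sub_zero]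

lemma condB1 {i n : ℕ} : ((n:ℚ) + 1/2 = (i:ℚ) - 1/2) ↔ i = n + 1 := by
  constructor
  · intro h; exact_mod_cast (by linarith : (i:ℚ) = (n:ℚ) + 1)
  · intro h; subst h; push_cast; ring

lemma condB2 {i n : ℕ} : ((n:ℚ) + 1/2 = (i:ℚ) + 1/2) ↔ i = n := by
  constructor
  · intro h; exact_mod_cast (by linarith : (i:ℚ) = (n:ℚ))
  · intro h; subst h; ring

lemma condA1 {i n : ℕ} : (-(n:ℚ) - 1/2 = -(i:ℚ) - 1/2) ↔ i = n := by
  constructor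
  · intro h; exact_mod_cast (by linarith : (i:ℚ) = (n:ℚ))
  · intro h; subst h; ring

lemma condA2 {i n : ℕ} : (-(n:ℚ) - 1/2 = -(i:ℚ) + 1/2) ↔ i = n + 1 := by
  constructor
  · intro h; exact_mod_cast (by linarith : (i:ℚ) = (n:ℚ) + 1)
  · intro h; subst h; push_cast; ring

lemma kexpB {i n : ℕ} :
    kexp (i:ℚ) ((n:ℚ) + 1/2) = (if i = n + 1 then 1 else 0) - (if i = n then 1 else 0) := by
  simp only [kexp, condB1, condB2]

lemma kexpA' {i n : ℕ} :
    kexp (-(i:ℚ)) (-(n:ℚ) - 1/2) = (if i = n then 1 else 0) - (if i = n + 1 then 1 else 0) := by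
  simp only [kexp, condA1, condA2]

lemma k1_w (r i n : ℕ) (hi1 : 1 ≤ i) (hn : n ≤ r) (c : K2) :
    ∃ s : K2, k1 r (i:ℚ) (uvq r (-(n:ℚ) - 1/2) + c • uvq r ((n:ℚ) + 1/2))
      = s • (uvq r (-(n:ℚ) - 1/2) + c • uvq r ((n:ℚ) + 1/2)) := by
  refine ⟨qq ^ ((if i = n + 1 then (1:ℤ) else 0) - (if i = n then 1 else 0)), ?_⟩
  simp only [k1, Module.End.mul_apply, map_add, map_smul, uvq, K1_uv, K1inv_uv,
    toHI_A hn, toHI_B hn, kexpA hi1, kexpA', kexpB, kexpB' hi1,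
    neg_zero, zpow_zero, one_smul, smul_smul, smul_add, neg_sub]
  rw [mul_comm]

lemma k1inv_w (r i n : ℕ) (hi1 : 1 ≤ i) (hn : n ≤ r) (c : K2) :
    ∃ s : K2, k1inv r (i:ℚ) (uvq r (-(n:ℚ) - 1/2) + c • uvq r ((n:ℚ) + 1/2))
      = s • (uvq r (-(n:ℚ) - 1/2) + c • uvq r ((n:ℚ) + 1/2)) := by
  refine ⟨qq ^ (-((if i = n + 1 then (1:ℤ) else 0) - (if i = n then 1 else 0))), ?_⟩
  simp only [k1inv, Module.End.mul_apply, map_add, map_smul, uvq, K1_uv, K1inv_uv,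
    toHI_A hn, toHI_B hn, kexpA hi1, kexpA', kexpB, kexpB' hi1,
    neg_zero, zpow_zero, one_smul, smul_smul, smul_add, neg_sub]
  rw [mul_comm]
lemma t1_wpos (r n : ℕ) (hn1 : 1 ≤ n) (hn : n ≤ r) (c : K2) :
    t1 r (uvq r (-(n:ℚ) - 1/2) + c • uvq r ((n:ℚ) + 1/2))
      = ((pp - pp⁻¹) / (qq - qq⁻¹)) • (uvq r (-(n:ℚ) - 1/2) + c • uvq r ((n:ℚ) + 1/2)) := by
  have hn0 : (1:ℚ) ≤ (n:ℚ) := by exact_mod_cast hn1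
  have hA1 : ¬(-(n:ℚ) - 1/2 = 0 + 1/2) := by intro h; linarith
  have hA2 : ¬(-(n:ℚ) - 1/2 = 0 - 1/2) := by intro h; linarith
  have hB1 : ¬((n:ℚ) + 1/2 = 0 + 1/2) := by intro h; linarith
  have hB2 : ¬((n:ℚ) + 1/2 = 0 - 1/2) := by intro h; linarith
  have hA1' : ¬(-(n:ℚ) - 1/2 = 1/2) := by intro h; linarith
  have hA2' : ¬(-(n:ℚ) - 1/2 = -(1/2 : ℚ)) := by intro h; linarith
  have hB1' : ¬((n:ℚ) + 1/2 = 1/2) := by intro h; linarith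
  have hB2' : ¬((n:ℚ) + 1/2 = -(1/2 : ℚ)) := by intro h; linarith
  simp only [t1, LinearMap.add_apply, LinearMap.smul_apply, Module.End.mul_apply,
    map_add, map_smul, uvq, E1_uv, F1_uv, K1inv_uv, toHI_A hn, toHI_B hn, kexp,
    if_neg hA1, if_neg hA2, if_neg hB1, if_neg hB2, if_neg hA1', if_neg hA2',
    if_neg hB1', if_neg hB2', sub_zero, sub_self, neg_zero,
    zpow_zero, one_smul, one_mul, mul_one, smul_zero, add_zero, zero_add,
    smul_add, smul_smul]
  rw [mul_comm]

lemma t1_w0 (r : ℕ) (c : K2) :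
    t1 r (uvq r (-(0:ℚ) - 1/2) + c • uvq r ((0:ℚ) + 1/2))
      = (((pp - pp⁻¹) / (qq - qq⁻¹)) * qq⁻¹ + c) • uvq r (-(0:ℚ) - 1/2)
        + (1 + c * (((pp - pp⁻¹) / (qq - qq⁻¹)) * qq)) • uvq r ((0:ℚ) + 1/2) := by
  have hA : (toHI r (-(0:ℚ) - 1/2)).1 = -(0:ℚ) - 1/2 :=
    toHI_val ⟨-1, by omega, by omega, by norm_num⟩
  have hB : (toHI r ((0:ℚ) + 1/2)).1 = (0:ℚ) + 1/2 :=
    toHI_val ⟨0, by omega, by omega, by norm_num⟩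
  have hA1 : ¬(-(0:ℚ) - 1/2 = 0 + 1/2) := by norm_num
  have hA2 : (-(0:ℚ) - 1/2 = 0 - 1/2) := by norm_num
  have hB1 : ((0:ℚ) + 1/2 = 0 + 1/2) := rfl
  have hB2 : ¬((0:ℚ) + 1/2 = 0 - 1/2) := by norm_num
  have huv : uv (toHI r ((0:ℚ) - 1/2)) = uv (toHI r (-(0:ℚ) - 1/2)) := by norm_num
  have hkA : kexp (0:ℚ) (-(0:ℚ) - 1/2) = 1 := by norm_num [kexp]
  have hkB : kexp (0:ℚ) ((0:ℚ) + 1/2) = -1 := by norm_num [kexp]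
  have hB' : (toHI r ((1:ℚ)/2)).1 = (1:ℚ)/2 :=
    toHI_val ⟨0, by omega, by omega, by norm_num⟩
  have hA1' : ¬(-(0:ℚ) - 1/2 = 1/2) := by norm_num
  have hBc : ¬((1:ℚ)/2 = 0 - 1/2) := by norm_num
  have hkB' : kexp (0:ℚ) ((1:ℚ)/2) = -1 := by norm_num [kexp]
  simp only [t1, LinearMap.add_apply, LinearMap.smul_apply, Module.End.mul_apply,
    map_add, map_smul, uvq, E1_uv, F1_uv, K1inv_uv, hA, hB, hkA, hkB,
    if_neg hA1, if_pos hA2, if_pos hB1, if_neg hB2, if_neg hA1', if_neg hBc,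
    hB', hkB', neg_neg, zpow_one, zpow_neg,
    one_smul, smul_zero, add_zero, zero_add, smul_add, smul_smul, huv,
    mul_inv_cancel₀ qq_ne, add_smul, one_smul, if_true]
  abel
lemma wplus_def (r n : ℕ) :
    wplus r n = uvq r (-(n:ℚ) - 1/2) + pp • uvq r ((n:ℚ) + 1/2) := rfl

lemma wminus_def (r n : ℕ) :
    wminus r n = uvq r (-(n:ℚ) - 1/2) + (-pp⁻¹) • uvq r ((n:ℚ) + 1/2) := by
  rw [wminus, neg_smul, ← sub_eq_add_neg]

lemma span_stable {r : ℕ} (T : Module.End K2 (V1 r)) (S : Set (V1 r))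
    (h : ∀ y ∈ S, T y ∈ Submodule.span K2 S) :
    ∀ x ∈ Submodule.span K2 S, T x ∈ Submodule.span K2 S := by
  intro x hx
  have hle : Submodule.map T (Submodule.span K2 S) ≤ Submodule.span K2 S := by
    rw [Submodule.map_span, Submodule.span_le]
    rintro _ ⟨y, hy, rfl⟩; exact h y hy
  exact hle (Submodule.mem_map_of_mem hx)

lemma coord_span {r : ℕ} (c : K2) (S : Set (V1 r))
    (hS : ∀ y ∈ S, ∃ n : ℕ, n ≤ r ∧ y = uvq r (-(n:ℚ) - 1/2) + c • uvq r ((n:ℚ) + 1/2))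
    {x : V1 r} (hx : x ∈ Submodule.span K2 S) (m : ℕ) (hm : m ≤ r) :
    x (toHI r ((m:ℚ) + 1/2)) = c * x (toHI r (-(m:ℚ) - 1/2)) := by
  induction hx using Submodule.span_induction with
  | mem y hy =>
    obtain ⟨n, hn, rfl⟩ := hS y hy
    have hne : toHI r (-(n:ℚ) - 1/2) ≠ toHI r ((m:ℚ) + 1/2) := by
      intro h
      have h' := congrArg Subtype.val h
      rw [toHI_A hn, toHI_B hm] at h'
      have h1 := Nat.cast_nonneg (α := ℚ) n
      have h2 := Nat.cast_nonneg (α := ℚ) m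
      linarith
    have hne2 : toHI r ((n:ℚ) + 1/2) ≠ toHI r (-(m:ℚ) - 1/2) := by
      intro h
      have h' := congrArg Subtype.val h
      rw [toHI_B hn, toHI_A hm] at h'
      have h1 := Nat.cast_nonneg (α := ℚ) n
      have h2 := Nat.cast_nonneg (α := ℚ) m
      linarith
    have hBB : (toHI r ((n:ℚ) + 1/2) = toHI r ((m:ℚ) + 1/2)) ↔ n = m := by
      refine Subtype.ext_iff.trans ?_
      rw [toHI_B hn, toHI_B hm]
      constructor
      · intro h; exact_mod_cast (by linarith : (n:ℚ) = (m:ℚ))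
      · intro h; subst h; rfl
    have hAA : (toHI r (-(n:ℚ) - 1/2) = toHI r (-(m:ℚ) - 1/2)) ↔ n = m := by
      refine Subtype.ext_iff.trans ?_
      rw [toHI_A hn, toHI_A hm]
      constructor
      · intro h; exact_mod_cast (by linarith : (n:ℚ) = (m:ℚ))
      · intro h; subst h; rfl
    by_cases h : n = m
    · simp only [uvq, uv, Finsupp.add_apply, Finsupp.smul_apply, Finsupp.single_apply,
        smul_eq_mul, if_neg hne, if_neg hne2, hBB, hAA, if_pos h]
      ring
    · simp only [uvq, uv, Finsupp.add_apply, Finsupp.smul_apply, Finsupp.single_apply,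
        smul_eq_mul, if_neg hne, if_neg hne2, hBB, hAA, if_neg h]
      ring
  | zero => simp
  | add x y hx hy ihx ihy => simp only [Finsupp.add_apply, ihx, ihy]; ring
  | smul a x hx ih => simp only [Finsupp.smul_apply, ih, smul_eq_mul]; ring
theorem coideal_action_on_w_even' (r : ℕ) :
    (∀ n : ℕ, n ≤ r →
      t1 r (wplus r n)
        = ((pp * qq ^ (if n = 0 then (1:ℤ) else 0) - pp⁻¹ * qq ^ (-(if n = 0 then (1:ℤ) else 0)))
            / (qq - qq⁻¹)) • wplus r n ∧
      t1 r (wminus r n)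
        = ((pp * qq ^ (-(if n = 0 then (1:ℤ) else 0)) - pp⁻¹ * qq ^ (if n = 0 then (1:ℤ) else 0))
            / (qq - qq⁻¹)) • wminus r n) := by
  intro n hn
  by_cases h0 : n = 0
  · subst h0
    rw [if_pos rfl]
    constructor
    · rw [wplus_def, Nat.cast_zero, t1_w0 r pp, smul_add, smul_smul]
      congr 1
      · congr 1
        rw [zpow_one, zpow_neg, zpow_one]
        linear_combination (-pp) * (mul_inv_cancel₀ qsub_ne)
      · congr 1
        rw [zpow_one, zpow_neg, zpow_one]
        linear_combination (-((qq - qq⁻¹)⁻¹ * (qq - qq⁻¹))) * (mul_inv_cancel₀ pp_ne) - (mul_inv_cancel₀ qsub_ne)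
    · rw [wminus_def, Nat.cast_zero, t1_w0 r (-pp⁻¹), smul_add, smul_smul]
      congr 1
      · congr 1
        rw [zpow_one, zpow_neg, zpow_one]
        linear_combination pp⁻¹ * (mul_inv_cancel₀ qsub_ne)
      · congr 1
        rw [zpow_one, zpow_neg, zpow_one]
        linear_combination (-((qq - qq⁻¹)⁻¹ * (qq - qq⁻¹))) * (mul_inv_cancel₀ pp_ne) - (mul_inv_cancel₀ qsub_ne)
  · rw [if_neg h0]
    have hn1 : 1 ≤ n := by omega
    constructor
    · rw [wplus_def, t1_wpos r n hn1 hn pp, neg_zero, zpow_zero, mul_one, mul_one]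
    · rw [wminus_def, t1_wpos r n hn1 hn (-pp⁻¹), neg_zero, zpow_zero, mul_one, mul_one]
lemma hEF_lemma (r : ℕ) : ∀ i : ℕ, 1 ≤ i → i ≤ r → ∀ n : ℕ, n ≤ r →
    f1 r (i : ℚ) (wplus r n) = (if i = n + 1 then wplus r (n + 1) else 0) ∧
    e1 r (i : ℚ) (wplus r n) = (if i = n then wplus r (n - 1) else 0) ∧
    f1 r (i : ℚ) (wminus r n) = (if i = n + 1 then wminus r (n + 1) else 0) ∧
    e1 r (i : ℚ) (wminus r n) = (if i = n then wminus r (n - 1) else 0) := by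
  intro i hi1 hir n hn
  refine ⟨?_, ?_, ?_, ?_⟩
  · rw [wplus_def, f1_w r i n hi1 hir hn pp]
    split_ifs with h
    · subst h
      rw [wplus_def]
    · rfl
  · rw [wplus_def, e1_w r i n hi1 hir hn pp]
    split_ifs with h
    · subst h
      rw [wplus_def]
      have hc : ((i - 1 : ℕ) : ℚ) = (i:ℚ) - 1 := by
        have : 1 ≤ i := hi1
        push_cast [this]
        ring
      rw [hc]
      ring_nf
    · rfl
  · rw [wminus_def, f1_w r i n hi1 hir hn (-pp⁻¹)]
    split_ifs with h
    · subst h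
      rw [wminus_def]
    · rfl
  · rw [wminus_def, e1_w r i n hi1 hir hn (-pp⁻¹)]
    split_ifs with h
    · subst h
      rw [wminus_def]
      have hc : ((i - 1 : ℕ) : ℚ) = (i:ℚ) - 1 := by
        have : 1 ≤ i := hi1
        push_cast [this]
        ring
      rw [hc]
      ring_nf
    · rfl
lemma hSp_lemma (r : ℕ) :
    ∀ x ∈ Submodule.span K2 {y | ∃ n : ℕ, n ≤ r ∧ y = wplus r n},
      t1 r x ∈ Submodule.span K2 {y | ∃ n : ℕ, n ≤ r ∧ y = wplus r n} ∧
      ∀ i : ℕ, 1 ≤ i → i ≤ r →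
        e1 r (i : ℚ) x ∈ Submodule.span K2 {y | ∃ n : ℕ, n ≤ r ∧ y = wplus r n} ∧
        f1 r (i : ℚ) x ∈ Submodule.span K2 {y | ∃ n : ℕ, n ≤ r ∧ y = wplus r n} ∧
        k1 r (i : ℚ) x ∈ Submodule.span K2 {y | ∃ n : ℕ, n ≤ r ∧ y = wplus r n} ∧
        k1inv r (i : ℚ) x ∈ Submodule.span K2 {y | ∃ n : ℕ, n ≤ r ∧ y = wplus r n} := by
  intro x hx
  constructor
  · refine span_stable (t1 r) _ ?_ x hx
    rintro y ⟨n, hn, rfl⟩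
    rw [(coideal_action_on_w_even' r n hn).1]
    exact Submodule.smul_mem _ _ (Submodule.subset_span ⟨n, hn, rfl⟩)
  · intro i hi1 hir
    refine ⟨?_, ?_, ?_, ?_⟩
    · refine span_stable (e1 r (i:ℚ)) _ ?_ x hx
      rintro y ⟨n, hn, rfl⟩
      rw [(hEF_lemma r i hi1 hir n hn).2.1]
      split_ifs with h
      · exact Submodule.subset_span ⟨n - 1, by omega, rfl⟩
      · exact zero_mem _
    · refine span_stable (f1 r (i:ℚ)) _ ?_ x hx
      rintro y ⟨n, hn, rfl⟩
      rw [(hEF_lemma r i hi1 hir n hn).1]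
      split_ifs with h
      · exact Submodule.subset_span ⟨n + 1, by omega, rfl⟩
      · exact zero_mem _
    · refine span_stable (k1 r (i:ℚ)) _ ?_ x hx
      rintro y ⟨n, hn, rfl⟩
      obtain ⟨s, hs⟩ := k1_w r i n hi1 hn pp
      rw [wplus_def, hs]
      exact Submodule.smul_mem _ _ (Submodule.subset_span ⟨n, hn, wplus_def r n⟩)
    · refine span_stable (k1inv r (i:ℚ)) _ ?_ x hx
      rintro y ⟨n, hn, rfl⟩
      obtain ⟨s, hs⟩ := k1inv_w r i n hi1 hn pp
      rw [wplus_def, hs]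
      exact Submodule.smul_mem _ _ (Submodule.subset_span ⟨n, hn, wplus_def r n⟩)

lemma hSm_lemma (r : ℕ) :
    ∀ x ∈ Submodule.span K2 {y | ∃ n : ℕ, n ≤ r ∧ y = wminus r n},
      t1 r x ∈ Submodule.span K2 {y | ∃ n : ℕ, n ≤ r ∧ y = wminus r n} ∧
      ∀ i : ℕ, 1 ≤ i → i ≤ r →
        e1 r (i : ℚ) x ∈ Submodule.span K2 {y | ∃ n : ℕ, n ≤ r ∧ y = wminus r n} ∧
        f1 r (i : ℚ) x ∈ Submodule.span K2 {y | ∃ n : ℕ, n ≤ r ∧ y = wminus r n} ∧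
        k1 r (i : ℚ) x ∈ Submodule.span K2 {y | ∃ n : ℕ, n ≤ r ∧ y = wminus r n} ∧
        k1inv r (i : ℚ) x ∈ Submodule.span K2 {y | ∃ n : ℕ, n ≤ r ∧ y = wminus r n} := by
  intro x hx
  constructor
  · refine span_stable (t1 r) _ ?_ x hx
    rintro y ⟨n, hn, rfl⟩
    rw [(coideal_action_on_w_even' r n hn).2]
    exact Submodule.smul_mem _ _ (Submodule.subset_span ⟨n, hn, rfl⟩)
  · intro i hi1 hir
    refine ⟨?_, ?_, ?_, ?_⟩
    · refine span_stable (e1 r (i:ℚ)) _ ?_ x hx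
      rintro y ⟨n, hn, rfl⟩
      rw [(hEF_lemma r i hi1 hir n hn).2.2.2]
      split_ifs with h
      · exact Submodule.subset_span ⟨n - 1, by omega, rfl⟩
      · exact zero_mem _
    · refine span_stable (f1 r (i:ℚ)) _ ?_ x hx
      rintro y ⟨n, hn, rfl⟩
      rw [(hEF_lemma r i hi1 hir n hn).2.2.1]
      split_ifs with h
      · exact Submodule.subset_span ⟨n + 1, by omega, rfl⟩
      · exact zero_mem _
    · refine span_stable (k1 r (i:ℚ)) _ ?_ x hx
      rintro y ⟨n, hn, rfl⟩
      obtain ⟨s, hs⟩ := k1_w r i n hi1 hn (-pp⁻¹)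
      rw [wminus_def, hs]
      exact Submodule.smul_mem _ _ (Submodule.subset_span ⟨n, hn, (wminus_def r n).symm⟩)
    · refine span_stable (k1inv r (i:ℚ)) _ ?_ x hx
      rintro y ⟨n, hn, rfl⟩
      obtain ⟨s, hs⟩ := k1inv_w r i n hi1 hn (-pp⁻¹)
      rw [wminus_def, hs]
      exact Submodule.smul_mem _ _ (Submodule.subset_span ⟨n, hn, (wminus_def r n).symm⟩)
lemma hInf_lemma (r : ℕ) :
    Submodule.span K2 {y | ∃ n : ℕ, n ≤ r ∧ y = wplus r n}
        ⊓ Submodule.span K2 {y | ∃ n : ℕ, n ≤ r ∧ y = wminus r n} = ⊥ := by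
  rw [eq_bot_iff]
  intro x hx
  rw [Submodule.mem_inf] at hx
  obtain ⟨hxp, hxm⟩ := hx
  have hp := fun m hm => coord_span pp _
    (fun y hy => by obtain ⟨n, hn, rfl⟩ := hy; exact ⟨n, hn, wplus_def r n⟩) hxp m hm
  have hm' := fun m hm => coord_span (-pp⁻¹) _
    (fun y hy => by obtain ⟨n, hn, rfl⟩ := hy; exact ⟨n, hn, wminus_def r n⟩) hxm m hm
  rw [Submodule.mem_bot]
  have hzero : ∀ n : ℕ, n ≤ r →
      x (toHI r (-(n:ℚ) - 1/2)) = 0 ∧ x (toHI r ((n:ℚ) + 1/2)) = 0 := by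
    intro n hn
    have h1 := hp n hn
    have h2 := hm' n hn
    have h3 : (pp + pp⁻¹) * x (toHI r (-(n:ℚ) - 1/2)) = 0 := by
      linear_combination h2 - h1
    have h4 : x (toHI r (-(n:ℚ) - 1/2)) = 0 := by
      rcases mul_eq_zero.mp h3 with h | h
      · exact absurd h psum_ne
      · exact h
    exact ⟨h4, by rw [h1, h4, mul_zero]⟩
  ext a
  obtain ⟨k, hk1, hk2, hk3⟩ := a.2
  simp only [Finsupp.coe_zero, Pi.zero_apply]
  by_cases hk : 0 ≤ k
  · have hn : k.toNat ≤ r := by omega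
    have hcast : ((k.toNat : ℕ) : ℚ) = (k : ℚ) := by exact_mod_cast Int.toNat_of_nonneg hk
    have ha : a = toHI r ((k.toNat : ℚ) + 1/2) := by
      apply Subtype.ext
      rw [toHI_B hn, hcast, hk3]
    rw [ha]
    exact (hzero k.toNat hn).2
  · have hn : (-k - 1).toNat ≤ r := by omega
    have hcast : (((-k - 1).toNat : ℕ) : ℚ) = ((-k - 1 : ℤ) : ℚ) := by
      exact_mod_cast Int.toNat_of_nonneg (by omega : (0:ℤ) ≤ -k - 1)
    have ha : a = toHI r (-(((-k - 1).toNat : ℕ) : ℚ) - 1/2) := by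
      apply Subtype.ext
      rw [toHI_A hn, hcast, hk3]
      push_cast
      ring
    rw [ha]
    exact (hzero _ hn).1

lemma hSup_lemma (r : ℕ) :
    Submodule.span K2 {y | ∃ n : ℕ, n ≤ r ∧ y = wplus r n}
        ⊔ Submodule.span K2 {y | ∃ n : ℕ, n ≤ r ∧ y = wminus r n} = ⊤ := by
  rw [eq_top_iff]
  intro x _
  have huv_mem : ∀ a : HIdx r, uv a ∈
      Submodule.span K2 {y | ∃ n : ℕ, n ≤ r ∧ y = wplus r n}
        ⊔ Submodule.span K2 {y | ∃ n : ℕ, n ≤ r ∧ y = wminus r n} := by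
    intro a
    obtain ⟨k, hk1, hk2, hk3⟩ := a.2
    by_cases hk : 0 ≤ k
    · set n := k.toNat with hndef
      have hn : n ≤ r := by omega
      have hcast : ((n : ℕ) : ℚ) = (k : ℚ) := by
        rw [hndef]; exact_mod_cast Int.toNat_of_nonneg hk
      have ha : a = toHI r ((n : ℚ) + 1/2) := by
        apply Subtype.ext
        rw [toHI_B hn, hcast, hk3]
      have key : wplus r n - wminus r n = (pp + pp⁻¹) • uvq r ((n:ℚ) + 1/2) := by
        rw [wplus_def, wminus_def, add_smul, neg_smul]
        abel
      have huv : uv a = (pp + pp⁻¹)⁻¹ • (wplus r n - wminus r n) := by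
        rw [key, smul_smul, inv_mul_cancel₀ psum_ne, one_smul, ha]
        rfl
      rw [huv]
      exact Submodule.smul_mem _ _ (Submodule.sub_mem _
        (Submodule.mem_sup_left (Submodule.subset_span ⟨n, hn, rfl⟩))
        (Submodule.mem_sup_right (Submodule.subset_span ⟨n, hn, rfl⟩)))
    · set n := (-k - 1).toNat with hndef
      have hn : n ≤ r := by omega
      have hcast : ((n : ℕ) : ℚ) = ((-k - 1 : ℤ) : ℚ) := by
        rw [hndef]; exact_mod_cast Int.toNat_of_nonneg (by omega : (0:ℤ) ≤ -k - 1)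
      have ha : a = toHI r (-(n : ℚ) - 1/2) := by
        apply Subtype.ext
        rw [toHI_A hn, hcast, hk3]
        push_cast
        ring
      have key : pp⁻¹ • wplus r n + pp • wminus r n = (pp + pp⁻¹) • uvq r (-(n:ℚ) - 1/2) := by
        rw [wplus_def, wminus_def, smul_add, smul_add, smul_smul, smul_smul,
          inv_mul_cancel₀ pp_ne, mul_neg, mul_inv_cancel₀ pp_ne, add_smul, neg_smul, one_smul]
        abel
      have huv : uv a = (pp + pp⁻¹)⁻¹ • (pp⁻¹ • wplus r n + pp • wminus r n) := by
        rw [key, smul_smul, inv_mul_cancel₀ psum_ne, one_smul, ha]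
        rfl
      rw [huv]
      exact Submodule.smul_mem _ _ (Submodule.add_mem _
        (Submodule.smul_mem _ _ (Submodule.mem_sup_left (Submodule.subset_span ⟨n, hn, rfl⟩)))
        (Submodule.smul_mem _ _ (Submodule.mem_sup_right (Submodule.subset_span ⟨n, hn, rfl⟩))))
  rw [← Finsupp.sum_single x]
  apply Submodule.finsuppSum_mem
  intro a _
  have hsingle : Finsupp.single a (x a) = (x a) • uv a := by
    rw [uv, Finsupp.smul_single, smul_eq_mul, mul_one]
  rw [hsingle]
  exact Submodule.smul_mem _ _ (huv_mem a)
/-- explicit action of the coideal operators on the vectors `w_n^±`, and the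
resulting decomposition `V = V⁺ ⊕ V⁻` into invariant submodules. -/
theorem coideal_action_on_w_even (r : ℕ) :
    (∀ n : ℕ, n ≤ r →
      t1 r (wplus r n)
        = ((pp * qq ^ (if n = 0 then (1:ℤ) else 0) - pp⁻¹ * qq ^ (-(if n = 0 then (1:ℤ) else 0)))
            / (qq - qq⁻¹)) • wplus r n ∧
      t1 r (wminus r n)
        = ((pp * qq ^ (-(if n = 0 then (1:ℤ) else 0)) - pp⁻¹ * qq ^ (if n = 0 then (1:ℤ) else 0))
            / (qq - qq⁻¹)) • wminus r n) ∧
    (∀ i : ℕ, 1 ≤ i → i ≤ r → ∀ n : ℕ, n ≤ r →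
      f1 r (i : ℚ) (wplus r n) = (if i = n + 1 then wplus r (n + 1) else 0) ∧
      e1 r (i : ℚ) (wplus r n) = (if i = n then wplus r (n - 1) else 0) ∧
      f1 r (i : ℚ) (wminus r n) = (if i = n + 1 then wminus r (n + 1) else 0) ∧
      e1 r (i : ℚ) (wminus r n) = (if i = n then wminus r (n - 1) else 0)) ∧
    (∀ x ∈ Submodule.span K2 {y | ∃ n : ℕ, n ≤ r ∧ y = wplus r n},
      t1 r x ∈ Submodule.span K2 {y | ∃ n : ℕ, n ≤ r ∧ y = wplus r n} ∧
      ∀ i : ℕ, 1 ≤ i → i ≤ r →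
        e1 r (i : ℚ) x ∈ Submodule.span K2 {y | ∃ n : ℕ, n ≤ r ∧ y = wplus r n} ∧
        f1 r (i : ℚ) x ∈ Submodule.span K2 {y | ∃ n : ℕ, n ≤ r ∧ y = wplus r n} ∧
        k1 r (i : ℚ) x ∈ Submodule.span K2 {y | ∃ n : ℕ, n ≤ r ∧ y = wplus r n} ∧
        k1inv r (i : ℚ) x ∈ Submodule.span K2 {y | ∃ n : ℕ, n ≤ r ∧ y = wplus r n}) ∧
    (∀ x ∈ Submodule.span K2 {y | ∃ n : ℕ, n ≤ r ∧ y = wminus r n},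
      t1 r x ∈ Submodule.span K2 {y | ∃ n : ℕ, n ≤ r ∧ y = wminus r n} ∧
      ∀ i : ℕ, 1 ≤ i → i ≤ r →
        e1 r (i : ℚ) x ∈ Submodule.span K2 {y | ∃ n : ℕ, n ≤ r ∧ y = wminus r n} ∧
        f1 r (i : ℚ) x ∈ Submodule.span K2 {y | ∃ n : ℕ, n ≤ r ∧ y = wminus r n} ∧
        k1 r (i : ℚ) x ∈ Submodule.span K2 {y | ∃ n : ℕ, n ≤ r ∧ y = wminus r n} ∧
        k1inv r (i : ℚ) x ∈ Submodule.span K2 {y | ∃ n : ℕ, n ≤ r ∧ y = wminus r n}) ∧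
    Submodule.span K2 {y | ∃ n : ℕ, n ≤ r ∧ y = wplus r n}
        ⊓ Submodule.span K2 {y | ∃ n : ℕ, n ≤ r ∧ y = wminus r n} = ⊥ ∧
    Submodule.span K2 {y | ∃ n : ℕ, n ≤ r ∧ y = wplus r n}
        ⊔ Submodule.span K2 {y | ∃ n : ℕ, n ≤ r ∧ y = wminus r n} = ⊤ :=
  ⟨coideal_action_on_w_even' r, hEF_lemma r, hSp_lemma r, hSm_lemma r,
    hInf_lemma r, hSup_lemma r⟩
end
end

section
/- There exists a function ζ : Λ → ℚ(q) with all values nonzero such that for all μ ∈ Λ and all 1 ≤ i ≤ r: ζ(μ + α_0) = −q·ζ(μ), ζ(μ + α_i) = −q^{(α_i − α_{−i}, μ + α_i)}·ζ(μ), and ζ(μ + α_{−i}) = −q^{(α_{−i}, μ + α_{−i}) − (α_i, μ)}·ζ(μ), and such that ζ(ε_{−r−1/2}) = 1. Moreover, every such ζ satisfies ζ(ε_{−i−1/2}) = (−q)^{−r+i} for all i ∈ {−r−1, −r, …, r}. -/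
open scoped BigOperators

attribute [local instance] Classical.propDecidable

noncomputable section

/-- The field `ℚ(q)`. -/
abbrev Kq : Type := RatFunc ℚ

/-- The indeterminate `q`. -/
noncomputable def qv : Kq := RatFunc.X

/-- The weight lattice `Λ`, the free abelian group on the symbols `ε_a`, `a ∈ I`. -/
abbrev Lam (r : ℕ) : Type := HIdx r →₀ ℤ

/-- The symmetric bilinear form on `Λ` with `(ε_a, ε_b) = δ_{a,b}`. -/
def bilin {r : ℕ} (x y : Lam r) : ℤ := x.sum (fun a n => n * y a)

/-- The basis element `ε_a` of `Λ` (for a rational label `a`). -/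
def epsv (r : ℕ) (a : ℚ) : Lam r := Finsupp.single (toHI r a) 1

/-- The simple root `α_i = ε_{i-1/2} - ε_{i+1/2}`. -/
def alR (r : ℕ) (i : ℚ) : Lam r := epsv r (i - 1/2) - epsv r (i + 1/2)

/-- The defining conditions on the function `ζ : Λ → ℚ(q)`. -/
def zetaCond (r : ℕ) (ζ : Lam r → Kq) : Prop :=
  (∀ μ : Lam r, ζ μ ≠ 0) ∧
  (∀ μ : Lam r, ζ (μ + alR r 0) = -qv * ζ μ) ∧
  (∀ μ : Lam r, ∀ i : ℕ, 1 ≤ i → i ≤ r →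
    ζ (μ + alR r (i : ℚ))
      = -(qv ^ (bilin (alR r (i : ℚ) - alR r (-(i : ℚ))) (μ + alR r (i : ℚ)))) * ζ μ ∧
    ζ (μ + alR r (-(i : ℚ)))
      = -(qv ^ (bilin (alR r (-(i : ℚ))) (μ + alR r (-(i : ℚ))) - bilin (alR r (i : ℚ)) μ))
          * ζ μ)

-- coordinate function
def cfn (r : ℕ) (μ : Lam r) (k : ℤ) : ℤ := μ (toHI r ((k : ℚ) + 1/2))

lemma toHI_val_s5 (r : ℕ) (k : ℤ) (h1 : -(r:ℤ)-1 ≤ k) (h2 : k ≤ r) :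
    (toHI r ((k:ℚ)+1/2)).val = (k:ℚ)+1/2 := by
  unfold toHI
  exact congrArg Subtype.val (dif_pos ⟨k, h1, h2, rfl⟩)

lemma toHI_inj (r : ℕ) (k k' : ℤ) (h1 : -(r:ℤ)-1 ≤ k) (h2 : k ≤ r)
    (h1' : -(r:ℤ)-1 ≤ k') (h2' : k' ≤ r) :
    toHI r ((k:ℚ)+1/2) = toHI r ((k':ℚ)+1/2) ↔ k = k' := by
  constructor
  · intro h
    have := congrArg Subtype.val h
    rw [toHI_val_s5 r k h1 h2, toHI_val_s5 r k' h1' h2'] at this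
    have : (k:ℚ) = (k':ℚ) := by linarith
    exact_mod_cast this
  · rintro rfl; rfl

lemma cfn_add (r : ℕ) (μ ν : Lam r) (k : ℤ) :
    cfn r (μ + ν) k = cfn r μ k + cfn r ν k := by
  simp [cfn]

lemma cfn_epsv (r : ℕ) (j k : ℤ) (hj1 : -(r:ℤ)-1 ≤ j) (hj2 : j ≤ r)
    (hk1 : -(r:ℤ)-1 ≤ k) (hk2 : k ≤ r) :
    cfn r (epsv r ((j:ℚ)+1/2)) k = if k = j then 1 else 0 := by
  unfold cfn epsv
  rw [Finsupp.single_apply]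
  by_cases h : k = j
  · subst h; simp
  · rw [if_neg, if_neg h]
    intro hc
    exact h (((toHI_inj r j k hj1 hj2 hk1 hk2).mp hc).symm)

lemma alR_eq (r : ℕ) (j : ℤ) :
    alR r (j:ℚ) = epsv r (((j-1:ℤ):ℚ)+1/2) - epsv r ((j:ℚ)+1/2) := by
  unfold alR
  rw [show (j:ℚ)-1/2 = ((j-1:ℤ):ℚ)+1/2 from by push_cast; ring]

lemma cfn_alR (r : ℕ) (j k : ℤ) (hj1 : -(r:ℤ) ≤ j) (hj2 : j ≤ r)
    (hk1 : -(r:ℤ)-1 ≤ k) (hk2 : k ≤ r) :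
    cfn r (alR r (j:ℚ)) k = (if k = j-1 then 1 else 0) - (if k = j then 1 else 0) := by
  rw [alR_eq]
  unfold cfn
  rw [Finsupp.sub_apply]
  have h1 := cfn_epsv r (j-1) k (by omega) (by omega) hk1 hk2
  have h2 := cfn_epsv r j k (by omega) (by omega) hk1 hk2
  unfold cfn at h1 h2
  rw [h1, h2]

lemma cfn_add_alR (r : ℕ) (μ : Lam r) (j k : ℤ) (hj1 : -(r:ℤ) ≤ j) (hj2 : j ≤ r)
    (hk1 : -(r:ℤ)-1 ≤ k) (hk2 : k ≤ r) :
    cfn r (μ + alR r (j:ℚ)) k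
      = cfn r μ k + ((if k = j-1 then 1 else 0) - (if k = j then 1 else 0)) := by
  rw [cfn_add, cfn_alR r j k hj1 hj2 hk1 hk2]

-- bilin lemmas
lemma bilin_single (r : ℕ) (a : HIdx r) (n : ℤ) (y : Lam r) :
    bilin (Finsupp.single a n) y = n * y a := by
  unfold bilin
  rw [Finsupp.sum_single_index]
  simp

lemma bilin_sub (r : ℕ) (x x' y : Lam r) :
    bilin (x - x') y = bilin x y - bilin x' y := by
  unfold bilin
  rw [Finsupp.sum_sub_index]
  intro a b1 b2; ring

lemma bilin_epsv (r : ℕ) (j : ℤ) (y : Lam r) :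
    bilin (epsv r ((j:ℚ)+1/2)) y = cfn r y j := by
  unfold epsv cfn
  rw [bilin_single]; ring

lemma bilin_alR (r : ℕ) (j : ℤ) (y : Lam r) :
    bilin (alR r (j:ℚ)) y = cfn r y (j-1) - cfn r y j := by
  rw [alR_eq, bilin_sub, bilin_epsv, bilin_epsv]
-- q2 x = x(x-1)/2
def q2 (x : ℤ) : ℤ := x * (x - 1) / 2

lemma q2_succ (x : ℤ) : q2 (x + 1) = q2 x + x := by
  unfold q2
  rw [show (x+1) * (x+1-1) = x*(x-1) + x*2 from by ring,
    Int.add_mul_ediv_right _ _ two_ne_zero]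

lemma q2_pred (x : ℤ) : q2 (x - 1) = q2 x - (x - 1) := by
  have := q2_succ (x - 1)
  simp only [sub_add_cancel] at this
  omega

def Qterm (r : ℕ) (k x y : ℤ) : ℤ :=
  x * y + q2 x + q2 (y + 1) - k * (x - y) - (r + 1) * (x + y)

lemma Qterm_x_succ (r : ℕ) (k x y : ℤ) :
    Qterm r k (x+1) y = Qterm r k x y + (x + y - k - (r+1)) := by
  unfold Qterm; rw [q2_succ]; ring

lemma Qterm_x_pred (r : ℕ) (k x y : ℤ) :
    Qterm r k (x-1) y = Qterm r k x y + (-(x-1) - y + k + (r+1)) := by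
  unfold Qterm; rw [q2_pred]; ring

lemma Qterm_y_succ (r : ℕ) (k x y : ℤ) :
    Qterm r k x (y+1) = Qterm r k x y + (x + y + 1 + k - (r+1)) := by
  unfold Qterm
  rw [show y + 1 + 1 = (y+1)+1 from rfl, q2_succ (y+1)]; ring

lemma Qterm_y_pred (r : ℕ) (k x y : ℤ) :
    Qterm r k x (y-1) = Qterm r k x y + (-x - y - k + (r+1)) := by
  unfold Qterm
  rw [show y - 1 + 1 = (y+1)-1 from by ring, q2_pred (y+1)]; ring

def Qf (r : ℕ) (μ : Lam r) : ℤ :=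
  ∑ k ∈ Finset.Icc (0:ℤ) (r:ℤ), Qterm r k (cfn r μ k) (cfn r μ (-k-1))

def Lf (r : ℕ) (μ : Lam r) : ℤ :=
  ∑ k ∈ Finset.Icc (-(r:ℤ)-1) (r:ℤ), (k + r + 1) * cfn r μ k

def zetaE (r : ℕ) (μ : Lam r) : Kq := (-1 : Kq) ^ (Lf r μ) * qv ^ (Qf r μ)

lemma Lf_add_alR (r : ℕ) (μ : Lam r) (j : ℤ) (hj1 : -(r:ℤ) ≤ j) (hj2 : j ≤ r) :
    Lf r (μ + alR r (j:ℚ)) = Lf r μ - 1 := by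
  unfold Lf
  have hpt : ∀ k ∈ Finset.Icc (-(r:ℤ)-1) (r:ℤ),
      (k + r + 1) * cfn r (μ + alR r (j:ℚ)) k
        = (k + r + 1) * cfn r μ k
          + ((if k = j-1 then ((j:ℤ)+r) else 0) + (if k = j then (-(j+(r:ℤ)+1)) else 0)) := by
    intro k hk
    simp only [Finset.mem_Icc] at hk
    rw [cfn_add_alR r μ j k hj1 hj2 hk.1 hk.2]
    by_cases h1 : k = j-1
    · subst h1; rw [if_pos rfl, if_neg (by omega), if_pos rfl, if_neg (by omega)]; ring
    · by_cases h2 : k = j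
      · subst h2; rw [if_neg h1, if_pos rfl, if_neg h1, if_pos rfl]; ring
      · rw [if_neg h1, if_neg h2, if_neg h1, if_neg h2]; ring
  rw [Finset.sum_congr rfl hpt, Finset.sum_add_distrib, Finset.sum_add_distrib,
    Finset.sum_ite_eq' _ (j-1) (fun _ => (j:ℤ)+r),
    Finset.sum_ite_eq' _ j (fun _ => -(j+(r:ℤ)+1))]
  rw [if_pos (by simp only [Finset.mem_Icc]; omega),
    if_pos (by simp only [Finset.mem_Icc]; omega)]
  ring

lemma Qf_add_al0 (r : ℕ) (μ : Lam r) :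
    Qf r (μ + alR r ((0:ℤ):ℚ)) = Qf r μ + 1 := by
  unfold Qf
  have hpt : ∀ k ∈ Finset.Icc (0:ℤ) (r:ℤ),
      Qterm r k (cfn r (μ + alR r ((0:ℤ):ℚ)) k) (cfn r (μ + alR r ((0:ℤ):ℚ)) (-k-1))
        = Qterm r k (cfn r μ k) (cfn r μ (-k-1)) + (if k = 0 then 1 else 0) := by
    intro k hk
    simp only [Finset.mem_Icc] at hk
    rw [cfn_add_alR r μ 0 k (by omega) (by omega) (by omega) (by omega),
      cfn_add_alR r μ 0 (-k-1) (by omega) (by omega) (by omega) (by omega)]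
    by_cases h1 : k = 0
    · rw [if_neg (show ¬ k = 0-1 by omega), if_pos h1,
        if_pos (show -k-1 = 0-1 by omega), if_neg (show ¬ -k-1 = 0 by omega), h1]
      rw [show cfn r μ 0 + (0 - 1) = cfn r μ 0 - 1 from by ring,
        show cfn r μ (-0-1) + (1 - 0) = cfn r μ (-0-1) + 1 from by ring,
        Qterm_x_pred, Qterm_y_succ]
      ring
    · rw [if_neg (show ¬ k = 0-1 by omega), if_neg h1,
        if_neg (show ¬ -k-1 = 0-1 by omega), if_neg (show ¬ -k-1 = 0 by omega)]
      ring
  rw [Finset.sum_congr rfl hpt, Finset.sum_add_distrib,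
    Finset.sum_ite_eq' _ (0:ℤ) (fun _ => (1:ℤ)),
    if_pos (by simp only [Finset.mem_Icc]; omega)]

lemma Qf_add_alR_pos (r : ℕ) (μ : Lam r) (j : ℤ) (hj1 : 1 ≤ j) (hj2 : j ≤ r) :
    Qf r (μ + alR r (j:ℚ))
      = Qf r μ + (cfn r μ (j-1) - cfn r μ j + cfn r μ (-j) - cfn r μ (-j-1) + 2) := by
  unfold Qf
  have hpt : ∀ k ∈ Finset.Icc (0:ℤ) (r:ℤ),
      Qterm r k (cfn r (μ + alR r (j:ℚ)) k) (cfn r (μ + alR r (j:ℚ)) (-k-1))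
        = Qterm r k (cfn r μ k) (cfn r μ (-k-1))
          + ((if k = j-1 then (cfn r μ (j-1) + cfn r μ (-j) - j - r) else 0)
             + (if k = j then (-(cfn r μ j) - cfn r μ (-j-1) + 2 + j + r) else 0)) := by
    intro k hk
    simp only [Finset.mem_Icc] at hk
    rw [cfn_add_alR r μ j k (by omega) (by omega) (by omega) (by omega),
      cfn_add_alR r μ j (-k-1) (by omega) (by omega) (by omega) (by omega)]
    rw [if_neg (by omega : ¬ (-k-1 = j-1)), if_neg (by omega : ¬ (-k-1 = j))]
    by_cases h1 : k = j-1
    · subst h1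
      rw [if_pos rfl, if_neg (by omega), if_pos rfl, if_neg (by omega)]
      rw [show cfn r μ (j-1) + (1-0) = cfn r μ (j-1) + 1 from by ring,
        show cfn r μ (-(j-1)-1) + (0-0) = cfn r μ (-j) from by rw [show -(j-1)-1 = -j from by ring]; ring,
        Qterm_x_succ]
      rw [show -(j-1)-1 = -j from by ring]
      ring
    · by_cases h2 : k = j
      · rw [if_neg h1, if_pos h2, if_neg h1, if_pos h2, h2]
        rw [show cfn r μ j + (0-1) = cfn r μ j - 1 from by ring,
          show cfn r μ (-j-1) + (0-0) = cfn r μ (-j-1) from by ring, Qterm_x_pred]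
        ring
      · rw [if_neg h1, if_neg h2, if_neg h1, if_neg h2]
        ring
  rw [Finset.sum_congr rfl hpt, Finset.sum_add_distrib, Finset.sum_add_distrib,
    Finset.sum_ite_eq' _ (j-1) (fun _ => cfn r μ (j-1) + cfn r μ (-j) - j - r),
    Finset.sum_ite_eq' _ j (fun _ => -(cfn r μ j) - cfn r μ (-j-1) + 2 + j + r),
    if_pos (by simp only [Finset.mem_Icc]; omega),
    if_pos (by simp only [Finset.mem_Icc]; omega)]
  ring

lemma Qf_add_alR_neg (r : ℕ) (μ : Lam r) (j : ℤ) (hj1 : 1 ≤ j) (hj2 : j ≤ r) :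
    Qf r (μ + alR r ((-j:ℤ):ℚ))
      = Qf r μ + (cfn r μ j + cfn r μ (-j-1) - cfn r μ (j-1) - cfn r μ (-j) + 2) := by
  unfold Qf
  have hpt : ∀ k ∈ Finset.Icc (0:ℤ) (r:ℤ),
      Qterm r k (cfn r (μ + alR r ((-j:ℤ):ℚ)) k) (cfn r (μ + alR r ((-j:ℤ):ℚ)) (-k-1))
        = Qterm r k (cfn r μ k) (cfn r μ (-k-1))
          + ((if k = j then (cfn r μ j + cfn r μ (-j-1) + j - r) else 0)
             + (if k = j-1 then (-(cfn r μ (j-1)) - cfn r μ (-j) - j + r + 2) else 0)) := by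
    intro k hk
    simp only [Finset.mem_Icc] at hk
    rw [cfn_add_alR r μ (-j) k (by omega) (by omega) (by omega) (by omega),
      cfn_add_alR r μ (-j) (-k-1) (by omega) (by omega) (by omega) (by omega)]
    rw [if_neg (by omega : ¬ (k = -j-1)), if_neg (by omega : ¬ (k = -j))]
    by_cases h1 : k = j
    · rw [if_pos (show -k-1 = -j-1 by omega), if_neg (show ¬ -k-1 = -j by omega),
        if_pos h1, if_neg (show ¬ k = j-1 by omega), h1]
      rw [show cfn r μ j + (0-0) = cfn r μ j from by ring,
        show cfn r μ (-j-1) + (1-0) = cfn r μ (-j-1) + 1 from by ring, Qterm_y_succ]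
      ring
    · by_cases h2 : k = j-1
      · subst h2
        rw [if_neg (by omega), if_pos (by omega), if_neg h1, if_pos rfl]
        rw [show cfn r μ (j-1) + (0-0) = cfn r μ (j-1) from by ring,
          show -(j-1)-1 = -j from by ring,
          show cfn r μ (-j) + (0-1) = cfn r μ (-j) - 1 from by ring, Qterm_y_pred]
        ring
      · rw [if_neg (by omega), if_neg (by omega), if_neg h1, if_neg h2]
        ring
  rw [Finset.sum_congr rfl hpt, Finset.sum_add_distrib, Finset.sum_add_distrib,
    Finset.sum_ite_eq' _ j (fun _ => cfn r μ j + cfn r μ (-j-1) + j - r),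
    Finset.sum_ite_eq' _ (j-1) (fun _ => -(cfn r μ (j-1)) - cfn r μ (-j) - j + r + 2),
    if_pos (by simp only [Finset.mem_Icc]; omega),
    if_pos (by simp only [Finset.mem_Icc]; omega)]
  ring

lemma qv_ne_zero : qv ≠ 0 := by unfold qv; exact RatFunc.X_ne_zero

lemma negqv_ne_zero : -qv ≠ 0 := neg_ne_zero.mpr qv_ne_zero

lemma zetaE_ne (r : ℕ) (μ : Lam r) : zetaE r μ ≠ 0 :=
  mul_ne_zero (zpow_ne_zero _ (by norm_num)) (zpow_ne_zero _ qv_ne_zero)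

lemma zetaE_rec (r : ℕ) (μ : Lam r) (j : ℤ) (hj1 : -(r:ℤ) ≤ j) (hj2 : j ≤ r) (B : ℤ)
    (hQ : Qf r (μ + alR r (j:ℚ)) = Qf r μ + B) :
    zetaE r (μ + alR r (j:ℚ)) = -(qv ^ B) * zetaE r μ := by
  unfold zetaE
  rw [hQ, Lf_add_alR r μ j hj1 hj2, zpow_sub_one₀ (by norm_num : (-1:Kq) ≠ 0),
    zpow_add₀ qv_ne_zero, inv_neg, inv_one]
  ring

lemma eps_add_alR (r : ℕ) (j : ℤ) :
    epsv r ((j:ℚ)+1/2) + alR r (j:ℚ) = epsv r (((j-1:ℤ):ℚ)+1/2) := by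
  rw [alR_eq]
  abel

lemma Lf_base (r : ℕ) : Lf r (epsv r (((-(r:ℤ)-1 : ℤ):ℚ)+1/2)) = 0 := by
  unfold Lf
  rw [Finset.sum_congr rfl (fun k hk => ?_), Finset.sum_const_zero]
  simp only [Finset.mem_Icc] at hk
  rw [cfn_epsv r (-(r:ℤ)-1) k (by omega) (by omega) hk.1 hk.2]
  by_cases h : k = -(r:ℤ)-1
  · rw [if_pos h]; omega
  · rw [if_neg h]; ring

lemma Qf_base (r : ℕ) : Qf r (epsv r (((-(r:ℤ)-1 : ℤ):ℚ)+1/2)) = 0 := by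
  unfold Qf
  rw [Finset.sum_congr rfl (fun k hk => ?_), Finset.sum_const_zero]
  simp only [Finset.mem_Icc] at hk
  rw [cfn_epsv r (-(r:ℤ)-1) k (by omega) (by omega) (by omega) (by omega),
    cfn_epsv r (-(r:ℤ)-1) (-k-1) (by omega) (by omega) (by omega) (by omega)]
  rw [if_neg (show ¬ k = -(r:ℤ)-1 by omega)]
  by_cases h : -k-1 = -(r:ℤ)-1
  · rw [if_pos h]
    have hk' : k = (r:ℤ) := by omega
    subst hk'
    unfold Qterm q2
    norm_num
    omega
  · rw [if_neg h]
    unfold Qterm q2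
    norm_num

lemma zetaE_base (r : ℕ) : zetaE r (epsv r (((-(r:ℤ)-1 : ℤ):ℚ)+1/2)) = 1 := by
  unfold zetaE
  rw [Lf_base, Qf_base]
  norm_num

/-- there exists a nowhere-vanishing `ζ : Λ → ℚ(q)` satisfying the recursions
with `ζ(ε_{-r-1/2}) = 1`, and every such `ζ` satisfies
`ζ(ε_{-i-1/2}) = (-q)^{-r+i}` for all `i ∈ {-r-1, …, r}`. -/
theorem zeta_exists_even (r : ℕ) :
    (∃ ζ : Lam r → Kq, zetaCond r ζ ∧ ζ (epsv r (-(r : ℚ) - 1/2)) = 1) ∧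
    (∀ ζ : Lam r → Kq, zetaCond r ζ → ζ (epsv r (-(r : ℚ) - 1/2)) = 1 →
      ∀ i : ℤ, -(r : ℤ) - 1 ≤ i → i ≤ r →
        ζ (epsv r (-(i : ℚ) - 1/2)) = (-qv) ^ (-(r : ℤ) + i)) := by
  constructor
  · refine ⟨zetaE r, ⟨fun μ => zetaE_ne r μ, ?_, ?_⟩, ?_⟩
    · intro μ
      have h := zetaE_rec r μ 0 (by omega) (by omega) 1 (Qf_add_al0 r μ)
      rw [show ((0:ℤ):ℚ) = (0:ℚ) by norm_num, zpow_one] at h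
      exact h
    · intro μ i h1 h2
      have hj1 : (1:ℤ) ≤ (i:ℤ) := by exact_mod_cast h1
      have hj2 : (i:ℤ) ≤ (r:ℤ) := by exact_mod_cast h2
      rw [show ((i:ℕ):ℚ) = (((i:ℤ)):ℚ) from by push_cast; ring,
        show -(((i:ℤ)):ℚ) = (((-(i:ℤ)):ℤ):ℚ) from by push_cast; ring]
      constructor
      · have hB := Qf_add_alR_pos r μ (i:ℤ) hj1 hj2
        have hE : bilin (alR r (((i:ℤ)):ℚ) - alR r (((-(i:ℤ)):ℤ):ℚ)) (μ + alR r (((i:ℤ)):ℚ))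
            = cfn r μ ((i:ℤ)-1) - cfn r μ (i:ℤ) + cfn r μ (-(i:ℤ)) - cfn r μ (-(i:ℤ)-1) + 2 := by
          rw [bilin_sub, bilin_alR, bilin_alR,
            cfn_add_alR r μ (i:ℤ) ((i:ℤ)-1) (by omega) (by omega) (by omega) (by omega),
            cfn_add_alR r μ (i:ℤ) (i:ℤ) (by omega) (by omega) (by omega) (by omega),
            cfn_add_alR r μ (i:ℤ) (-(i:ℤ)-1) (by omega) (by omega) (by omega) (by omega),
            cfn_add_alR r μ (i:ℤ) (-(i:ℤ)) (by omega) (by omega) (by omega) (by omega)]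
          split_ifs <;> omega
        rw [hE]
        exact zetaE_rec r μ (i:ℤ) (by omega) (by omega) _ hB
      · have hB := Qf_add_alR_neg r μ (i:ℤ) hj1 hj2
        have hE : bilin (alR r (((-(i:ℤ)):ℤ):ℚ)) (μ + alR r (((-(i:ℤ)):ℤ):ℚ))
              - bilin (alR r (((i:ℤ)):ℚ)) μ
            = cfn r μ (i:ℤ) + cfn r μ (-(i:ℤ)-1) - cfn r μ ((i:ℤ)-1) - cfn r μ (-(i:ℤ)) + 2 := by
          rw [bilin_alR, bilin_alR,
            cfn_add_alR r μ (-(i:ℤ)) (-(i:ℤ)-1) (by omega) (by omega) (by omega) (by omega),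
            cfn_add_alR r μ (-(i:ℤ)) (-(i:ℤ)) (by omega) (by omega) (by omega) (by omega)]
          split_ifs <;> omega
        rw [hE]
        exact zetaE_rec r μ (-(i:ℤ)) (by omega) (by omega) _ hB
    · rw [show -(r:ℚ)-1/2 = (((-(r:ℤ)-1 : ℤ)):ℚ)+1/2 from by push_cast; ring]
      exact zetaE_base r
  · rintro ζ ⟨hne, h0, hrec⟩ hnorm i hi1 hi2
    have step : ∀ j : ℤ, -(r:ℤ) ≤ j → j ≤ (r:ℤ) →
        ζ (epsv r (((j-1:ℤ):ℚ)+1/2)) = -qv * ζ (epsv r ((j:ℚ)+1/2)) := by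
      intro j hj1 hj2
      rcases lt_trichotomy j 0 with hneg | rfl | hpos
      · have hcast : (((-j).toNat:ℕ):ℚ) = ((-j:ℤ):ℚ) := by
          exact_mod_cast congrArg (fun z : ℤ => (z:ℚ)) (Int.toNat_of_nonneg (show (0:ℤ) ≤ -j by omega))
        have h := (hrec (epsv r ((j:ℚ)+1/2)) (-j).toNat (by omega) (by omega)).2
        rw [hcast, show -((-j:ℤ):ℚ) = ((j:ℤ):ℚ) from by push_cast; ring,
          eps_add_alR] at h
        have hE : bilin (alR r ((j:ℚ))) (epsv r (((j-1:ℤ):ℚ)+1/2))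
              - bilin (alR r ((-j:ℤ):ℚ)) (epsv r ((j:ℚ)+1/2)) = 1 := by
          rw [bilin_alR, bilin_alR,
            cfn_epsv r (j-1) (j-1) (by omega) (by omega) (by omega) (by omega),
            cfn_epsv r (j-1) j (by omega) (by omega) (by omega) (by omega),
            cfn_epsv r j (-j-1) (by omega) (by omega) (by omega) (by omega),
            cfn_epsv r j (-j) (by omega) (by omega) (by omega) (by omega)]
          split_ifs <;> omega
        rw [hE, zpow_one] at h
        exact h
      · have h := h0 (epsv r (((0:ℤ):ℚ)+1/2))
        rw [show (0:ℚ) = ((0:ℤ):ℚ) from by norm_num, eps_add_alR] at h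
        exact h
      · have hcast : ((j.toNat:ℕ):ℚ) = ((j:ℤ):ℚ) := by
          exact_mod_cast congrArg (fun z : ℤ => (z:ℚ)) (Int.toNat_of_nonneg (show (0:ℤ) ≤ j by omega))
        have h := (hrec (epsv r ((j:ℚ)+1/2)) j.toNat (by omega) (by omega)).1
        rw [hcast, show -((j:ℤ):ℚ) = ((-j:ℤ):ℚ) from by push_cast; ring,
          eps_add_alR] at h
        have hE : bilin (alR r ((j:ℚ)) - alR r ((-j:ℤ):ℚ)) (epsv r (((j-1:ℤ):ℚ)+1/2)) = 1 := by
          rw [bilin_sub, bilin_alR, bilin_alR,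
            cfn_epsv r (j-1) (j-1) (by omega) (by omega) (by omega) (by omega),
            cfn_epsv r (j-1) j (by omega) (by omega) (by omega) (by omega),
            cfn_epsv r (j-1) (-j-1) (by omega) (by omega) (by omega) (by omega),
            cfn_epsv r (j-1) (-j) (by omega) (by omega) (by omega) (by omega)]
          split_ifs <;> omega
        rw [hE, zpow_one] at h
        exact h
    have main : ∀ n : ℕ, ∀ m : ℤ, m = (n:ℤ) - (r:ℤ) - 1 → (n:ℤ) ≤ 2*(r:ℤ)+1 →
        ζ (epsv r ((m:ℚ)+1/2)) = (-qv)^(-(n:ℤ)) := by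
      intro n
      induction n with
      | zero =>
        intro m hm _
        have harg : epsv r ((m:ℚ)+1/2) = epsv r (-(r:ℚ)-1/2) := by
          subst hm; congr 1; push_cast; ring
        rw [harg, hnorm]
        norm_num
      | succ n ih =>
        intro m hm hb
        have hs := step m (by omega) (by omega)
        have hi' := ih (m-1) (by omega) (by omega)
        have h2 : -qv * ζ (epsv r ((m:ℚ)+1/2)) = (-qv)^(-(n:ℤ)) := by
          rw [← hs]; exact hi'
        have h3 : ζ (epsv r ((m:ℚ)+1/2)) = (-qv)⁻¹ * ((-qv)^(-(n:ℤ))) := by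
          rw [← h2, inv_mul_cancel_left₀ negqv_ne_zero]
        rw [h3, ← zpow_neg_one, ← zpow_add₀ negqv_ne_zero]
        congr 1
        push_cast
        ring
    have hn := main ((r:ℤ) - i).toNat (-i-1) (by omega) (by omega)
    rw [show -(i:ℚ)-1/2 = (((-i-1:ℤ)):ℚ)+1/2 from by push_cast; ring, hn]
    congr 1
    omega
end
end
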